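/- Let f : ℝ² → ℝ be continuous and twice continuously differentiable on a nonempty open convex set S ⊆ ℝ². If D_f(x) > 0 for all x ∈ S, where D_f denotes the determinant of the bordered Hessian of f, then f is quasiconcave on the closure of S. -/

import Mathlib

open Filter Set Topology

private lemma clm_pair {M : Type*} [NormedAddCommGroup M] [NormedSpace ℝ M]
    (L : ℝ × ℝ →L[ℝ] M) (a b : ℝ) :
    L (a, b) = a • L ((1:ℝ), (0:ℝ)) + b • L ((0:ℝ), (1:ℝ)) := by
  have h : ((a, b) : ℝ × ℝ) = a • (((1:ℝ), (0:ℝ)) : ℝ × ℝ) + b • (((0:ℝ), (1:ℝ)) : ℝ × ℝ) := by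
    simp [Prod.ext_iff]
  rw [h, map_add, map_smul, map_smul]

set_option maxHeartbeats 1000000 in
theorem stmt_6 (f : ℝ × ℝ → ℝ) (hf : Continuous f) (S : Set (ℝ × ℝ))
    (hSopen : IsOpen S) (hSconv : Convex ℝ S) (hSne : S.Nonempty)
    (hC2 : ContDiffOn ℝ 2 f S)
    (hD : ∀ x ∈ S,
      2 * fderiv ℝ f x ((1 : ℝ), (0 : ℝ)) * fderiv ℝ f x ((0 : ℝ), (1 : ℝ)) *
            fderiv ℝ (fun y => fderiv ℝ f y ((1 : ℝ), (0 : ℝ))) x ((0 : ℝ), (1 : ℝ)) -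
          (fderiv ℝ f x ((1 : ℝ), (0 : ℝ))) ^ 2 *
            fderiv ℝ (fun y => fderiv ℝ f y ((0 : ℝ), (1 : ℝ))) x ((0 : ℝ), (1 : ℝ)) -
          (fderiv ℝ f x ((0 : ℝ), (1 : ℝ))) ^ 2 *
            fderiv ℝ (fun y => fderiv ℝ f y ((1 : ℝ), (0 : ℝ))) x ((1 : ℝ), (0 : ℝ)) > 0) :
    QuasiconcaveOn ℝ (closure S) f := by
  set F : ℝ × ℝ → (ℝ × ℝ →L[ℝ] ℝ) := fun z => fderiv ℝ f z with hFdef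
  -- basic differentiability facts
  have hF1 : ContDiffOn ℝ 1 F S := hC2.fderiv_of_isOpen hSopen (by norm_num)
  have hfdiff : DifferentiableOn ℝ f S := hC2.differentiableOn (by norm_num)
  have hHasF : ∀ p ∈ S, HasFDerivAt f (F p) p := fun p hp =>
    (hfdiff.differentiableAt (hSopen.mem_nhds hp)).hasFDerivAt
  have hHasF' : ∀ p ∈ S, HasFDerivAt F (fderiv ℝ F p) p := fun p hp =>
    (((hF1.differentiableOn one_ne_zero)).differentiableAt (hSopen.mem_nhds hp)).hasFDerivAt
  -- second derivative evaluation
  have heval : ∀ p ∈ S, ∀ w u : ℝ × ℝ,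
      fderiv ℝ (fun z => fderiv ℝ f z w) p u = fderiv ℝ F p u w := by
    intro p hp w u
    have h := ((ContinuousLinearMap.apply ℝ ℝ w).hasFDerivAt).comp p (hHasF' p hp)
    have h2 : HasFDerivAt (fun z => fderiv ℝ f z w)
        (((ContinuousLinearMap.apply ℝ ℝ) w).comp (fderiv ℝ F p)) p := h
    rw [h2.fderiv]
    rfl
  -- symmetry of second derivative
  have hsymm : ∀ p ∈ S, ∀ u w : ℝ × ℝ, fderiv ℝ F p u w = fderiv ℝ F p w u := by
    intro p hp u w
    have hev : ∀ᶠ y in 𝓝 p, HasFDerivAt f (F y) y := by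
      filter_upwards [hSopen.mem_nhds hp] with y hy using hHasF y hy
    exact second_derivative_symmetric_of_eventually hev (hHasF' p hp) u w
  -- Lemma A: negativity of the second derivative on the tangent space of the gradient
  have hQneg : ∀ p ∈ S, ∀ v : ℝ × ℝ, v ≠ 0 → fderiv ℝ f p v = 0 → fderiv ℝ F p v v < 0 := by
    intro p hp v hv0 hvperp
    obtain ⟨v₁, v₂⟩ := v
    set f₁ := fderiv ℝ f p ((1:ℝ), (0:ℝ)) with hf₁
    set f₂ := fderiv ℝ f p ((0:ℝ), (1:ℝ)) with hf₂
    set A := fderiv ℝ F p ((1:ℝ),(0:ℝ)) ((1:ℝ),(0:ℝ)) with hA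
    set B := fderiv ℝ F p ((0:ℝ),(1:ℝ)) ((1:ℝ),(0:ℝ)) with hB
    set C := fderiv ℝ F p ((0:ℝ),(1:ℝ)) ((0:ℝ),(1:ℝ)) with hC
    have hDp := hD p hp
    rw [heval p hp ((1:ℝ),(0:ℝ)) ((0:ℝ),(1:ℝ)), heval p hp ((0:ℝ),(1:ℝ)) ((0:ℝ),(1:ℝ)),
      heval p hp ((1:ℝ),(0:ℝ)) ((1:ℝ),(0:ℝ))] at hDp
    rw [← hf₁, ← hf₂, ← hA, ← hB, ← hC] at hDp
    -- hDp : 2 * f₁ * f₂ * B - f₁ ^ 2 * C - f₂ ^ 2 * A > 0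
    have hperp : v₁ * f₁ + v₂ * f₂ = 0 := by
      have := hvperp
      rw [clm_pair (fderiv ℝ f p) v₁ v₂] at this
      simpa [smul_eq_mul, ← hf₁, ← hf₂, mul_comm] using this
    have hB' : fderiv ℝ F p ((1:ℝ),(0:ℝ)) ((0:ℝ),(1:ℝ)) = B := by
      rw [hB]; exact hsymm p hp _ _
    have hQ : fderiv ℝ F p (v₁, v₂) (v₁, v₂)
        = v₁^2 * A + 2 * v₁ * v₂ * B + v₂^2 * C := by
      rw [clm_pair (fderiv ℝ F p) v₁ v₂]
      simp only [ContinuousLinearMap.add_apply, ContinuousLinearMap.coe_smul',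
        Pi.smul_apply, smul_eq_mul]
      rw [clm_pair (fderiv ℝ F p ((1:ℝ),(0:ℝ))) v₁ v₂,
        clm_pair (fderiv ℝ F p ((0:ℝ),(1:ℝ))) v₁ v₂]
      simp only [smul_eq_mul, ← hA, ← hB, ← hC, hB']
      ring
    rw [hQ]
    -- gradient is nonzero
    have hgrad : f₁^2 + f₂^2 > 0 := by
      rcases eq_or_ne f₁ 0 with h1 | h1
      · rcases eq_or_ne f₂ 0 with h2 | h2
        · rw [h1, h2] at hDp; norm_num at hDp
        · positivity
      · positivity
    have hvpos : v₁^2 + v₂^2 > 0 := by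
      rcases eq_or_ne v₁ 0 with h1 | h1
      · rcases eq_or_ne v₂ 0 with h2 | h2
        · exact absurd (by simp [h1, h2, Prod.ext_iff]) hv0
        · positivity
      · positivity
    have hid : (f₁^2 + f₂^2) * (v₁^2 * A + 2 * v₁ * v₂ * B + v₂^2 * C)
        = -((v₁^2 + v₂^2) * (2 * f₁ * f₂ * B - f₁^2 * C - f₂^2 * A)) := by
      linear_combination ((v₁*f₁ - v₂*f₂)*A + (v₂*f₂ - v₁*f₁)*C + 2*(f₁*v₂ + f₂*v₁)*B) * hperp
    nlinarith [mul_pos hvpos hDp]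
  -- core property on S
  have key : ∀ x ∈ S, ∀ y ∈ S, ∀ a b : ℝ, 0 ≤ a → 0 ≤ b → a + b = 1 →
      min (f x) (f y) ≤ f (a • x + b • y) := by
    intro x hx y hy a b ha hb hab
    rcases eq_or_lt_of_le hb with hb0 | hb0
    · have : a = 1 := by linarith
      simp [← hb0, this, min_le_left]
    rcases eq_or_lt_of_le ha with ha0 | ha0
    · have : b = 1 := by linarith
      simp [← ha0, this, min_le_right]
    rcases eq_or_ne x y with hxy | hxy
    · have : a • x + b • y = x := by rw [hxy, ← add_smul, hab, one_smul]
      simp [this, min_le_left]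
    have hb1 : b < 1 := by linarith
    set v : ℝ × ℝ := y - x with hv
    have hvne : v ≠ 0 := sub_ne_zero.mpr (Ne.symm hxy)
    set γ : ℝ → ℝ × ℝ := fun t => x + t • v with hγ
    have hγS : ∀ t ∈ Icc (0:ℝ) 1, γ t ∈ S := fun t ht =>
      hSconv.add_smul_sub_mem hx hy ht
    have hcombo : a • x + b • y = γ b := by
      have ha' : a = 1 - b := by linarith
      simp only [hγ, hv, ha', smul_sub]
      module
    set g : ℝ → ℝ := fun t => f (γ t) with hg
    have hγcont : Continuous γ := continuous_const.add (continuous_id.smul continuous_const)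
    have hgcont : Continuous g := hf.comp hγcont
    have hγderiv : ∀ t : ℝ, HasDerivAt γ v t := by
      intro t
      have h := ((hasDerivAt_id t).smul_const v).const_add x
      simp only [one_smul] at h
      exact h
    have hg' : ∀ t, γ t ∈ S → HasDerivAt g (F (γ t) v) t := fun t ht =>
      (hHasF (γ t) ht).comp_hasDerivAt t (hγderiv t)
    have hG' : ∀ t, γ t ∈ S → HasDerivAt (fun s => F (γ s) v) (fderiv ℝ F (γ t) v v) t := by
      intro t ht
      have h2 : HasDerivAt (fun s => F (γ s)) (fderiv ℝ F (γ t) v) t :=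
        (hHasF' (γ t) ht).comp_hasDerivAt t (hγderiv t)
      exact ((ContinuousLinearMap.apply ℝ ℝ v).hasFDerivAt).comp_hasDerivAt t h2
    -- min of g on [0,1]
    obtain ⟨t₀, ht₀mem, ht₀min⟩ :=
      isCompact_Icc.exists_isMinOn (nonempty_Icc.mpr zero_le_one) hgcont.continuousOn
    rw [hcombo]
    by_contra hcon
    push_neg at hcon
    have hg0 : g 0 = f x := by simp [hg, hγ]
    have hg1 : g 1 = f y := by simp [hg, hγ, hv]
    have hgb : g b < min (g 0) (g 1) := by rw [hg0, hg1]; exact hcon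
    have hbIcc : b ∈ Icc (0:ℝ) 1 := ⟨hb, le_of_lt hb1⟩
    have ht₀b : g t₀ ≤ g b := ht₀min hbIcc
    have ht₀0 : t₀ ≠ 0 := by
      intro h; rw [h] at ht₀b
      have := min_le_left (g 0) (g 1); linarith
    have ht₀1 : t₀ ≠ 1 := by
      intro h; rw [h] at ht₀b
      have := min_le_right (g 0) (g 1); linarith
    have ht₀Ioo : t₀ ∈ Ioo (0:ℝ) 1 :=
      ⟨lt_of_le_of_ne ht₀mem.1 (Ne.symm ht₀0), lt_of_le_of_ne ht₀mem.2 ht₀1⟩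
    have hpS : γ t₀ ∈ S := hγS t₀ ht₀mem
    have hlocmin : IsLocalMin g t₀ := ht₀min.isLocalMin (Icc_mem_nhds ht₀Ioo.1 ht₀Ioo.2)
    have hG0 : F (γ t₀) v = 0 := hlocmin.hasDerivAt_eq_zero (hg' t₀ hpS)
    have hQ : fderiv ℝ F (γ t₀) v v < 0 := hQneg (γ t₀) hpS v hvne hG0
    -- get an interval to the right of t₀ where the derivative of g is negative
    have hslope := hasDerivAt_iff_tendsto_slope.1 (hG' t₀ hpS)
    have hev : ∀ᶠ t in 𝓝[≠] t₀, slope (fun s => F (γ s) v) t₀ t < 0 :=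
      hslope.eventually_lt_const hQ
    have hev' : ∀ᶠ t in 𝓝[>] t₀, slope (fun s => F (γ s) v) t₀ t < 0 :=
      hev.filter_mono (nhdsWithin_mono t₀ (fun y hy => ne_of_gt hy))
    obtain ⟨u, hu, hsub⟩ := mem_nhdsGT_iff_exists_Ioo_subset.1 hev'
    set m := (t₀ + min u 1) / 2 with hm
    have humem : t₀ < u := hu
    have hmlt : t₀ < m := by
      have : t₀ < min u 1 := lt_min humem ht₀Ioo.2
      rw [hm]; linarith
    have hm1 : m < min u 1 := by
      have : t₀ < min u 1 := lt_min humem ht₀Ioo.2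
      rw [hm]; linarith
    have hmu : m < u := lt_of_lt_of_le hm1 (min_le_left _ _)
    have hm1' : m < 1 := lt_of_lt_of_le hm1 (min_le_right _ _)
    have hanti : StrictAntiOn g (Icc t₀ m) := by
      apply strictAntiOn_of_deriv_neg (convex_Icc t₀ m) hgcont.continuousOn
      intro τ hτ
      rw [interior_Icc] at hτ
      have hτS : γ τ ∈ S := hγS τ ⟨le_trans ht₀mem.1 (le_of_lt hτ.1),
        le_of_lt (lt_trans hτ.2 hm1')⟩
      have hderiv : deriv g τ = F (γ τ) v := (hg' τ hτS).deriv
      have hτslope : slope (fun s => F (γ s) v) t₀ τ < 0 :=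
        hsub ⟨hτ.1, lt_trans hτ.2 hmu⟩
      rw [slope_def_field] at hτslope
      rw [hG0] at hτslope
      have hτpos : (0:ℝ) < τ - t₀ := by linarith [hτ.1]
      rw [hderiv]
      have hdivneg : F (γ τ) v / (τ - t₀) < 0 := by
        simpa [sub_zero] using hτslope
      by_contra hge
      push_neg at hge
      have : 0 ≤ F (γ τ) v / (τ - t₀) := div_nonneg hge (le_of_lt hτpos)
      linarith
    have hgm : g m < g t₀ := hanti ⟨le_rfl, le_of_lt hmlt⟩ ⟨le_of_lt hmlt, le_rfl⟩ hmlt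
    have : g t₀ ≤ g m := ht₀min ⟨le_trans ht₀mem.1 (le_of_lt hmlt), le_of_lt hm1'⟩
    linarith
  -- extend to the closure by continuity
  rw [quasiconcaveOn_iff_min_le]
  refine ⟨hSconv.closure, ?_⟩
  intro x hx y hy a b ha hb hab
  obtain ⟨z₀, hz₀⟩ := hSne
  have hz₀int : z₀ ∈ interior S := by rwa [hSopen.interior_eq]
  have hmem : ∀ t : ℝ, 0 < t → t ≤ 1 → ∀ w ∈ closure S, t • z₀ + (1 - t) • w ∈ S := by
    intro t ht ht1 w hw
    have := hSconv.combo_interior_closure_mem_interior (a := t) (b := 1 - t) hz₀int hw ht (by linarith) (by ring)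
    rwa [hSopen.interior_eq] at this
  have hineq : ∀ᶠ t in 𝓝[>] (0:ℝ),
      min (f (t • z₀ + (1 - t) • x)) (f (t • z₀ + (1 - t) • y))
        ≤ f (t • z₀ + (1 - t) • (a • x + b • y)) := by
    filter_upwards [Ioo_mem_nhdsGT_of_mem (by constructor <;> norm_num :
        (0:ℝ) ∈ Ico (0:ℝ) 1)] with t ht
    have hxt : t • z₀ + (1 - t) • x ∈ S := hmem t ht.1 (le_of_lt ht.2) x hx
    have hyt : t • z₀ + (1 - t) • y ∈ S := hmem t ht.1 (le_of_lt ht.2) y hy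
    have hcombo : a • (t • z₀ + (1 - t) • x) + b • (t • z₀ + (1 - t) • y)
        = t • z₀ + (1 - t) • (a • x + b • y) := by
      have hab' : b = 1 - a := by linarith
      rw [hab']
      module
    have := key _ hxt _ hyt a b ha hb hab
    rwa [hcombo] at this
  have hlim1 : Tendsto (fun t : ℝ => min (f (t • z₀ + (1 - t) • x)) (f (t • z₀ + (1 - t) • y)))
      (𝓝[>] (0:ℝ)) (𝓝 (min (f x) (f y))) := by
    have hcx : Continuous fun t : ℝ => f (t • z₀ + (1 - t) • x) :=
      hf.comp ((continuous_id.smul continuous_const).add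
        ((continuous_const.sub continuous_id).smul continuous_const))
    have hcy : Continuous fun t : ℝ => f (t • z₀ + (1 - t) • y) :=
      hf.comp ((continuous_id.smul continuous_const).add
        ((continuous_const.sub continuous_id).smul continuous_const))
    have := ((hcx.tendsto 0).min (hcy.tendsto 0)).mono_left
      (nhdsWithin_le_nhds (s := Ioi (0:ℝ)))
    simpa using this
  have hlim2 : Tendsto (fun t : ℝ => f (t • z₀ + (1 - t) • (a • x + b • y)))
      (𝓝[>] (0:ℝ)) (𝓝 (f (a • x + b • y))) := by
    have hc : Continuous fun t : ℝ => f (t • z₀ + (1 - t) • (a • x + b • y)) :=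
      hf.comp ((continuous_id.smul continuous_const).add
        ((continuous_const.sub continuous_id).smul continuous_const))
    have := (hc.tendsto 0).mono_left (nhdsWithin_le_nhds (s := Ioi (0:ℝ)))
    simpa using this
  exact le_of_tendsto_of_tendsto hlim1 hlim2 hineq
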